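/- Let D_n(t) := det(∫_{-1}^{1} x^{j+k}·(1-x^2)^α·exp(-t/x^2) dx)_{j,k=0}^{n-1} and, for parameters a and b, let D̃_n(t,a,b) := det(∫_0^1 x^{i+j}·x^a·(1-x)^b·exp(-t/x) dx)_{i,j=0}^{n-1}. Then for every n ≥ 0: D_{2n}(t) = D̃_n(t, 1/2, α)·D̃_n(t, -1/2, α) and D_{2n+1}(t) = D̃_n(t, 1/2, α)·D̃_{n+1}(t, -1/2, α). -/

import Mathlib

open MeasureTheory intervalIntegral Set

lemma mu_odd (α t : ℝ) (m : ℕ) (hm : Odd m) :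
    ∫ x in (-1:ℝ)..1, x ^ m * (1 - x ^ 2) ^ α * Real.exp (-t / x ^ 2) = 0 := by
  have h := intervalIntegral.integral_comp_neg (a := (-1:ℝ)) (b := 1)
    (fun x => x ^ m * (1 - x ^ 2) ^ α * Real.exp (-t / x ^ 2))
  simp only [neg_neg] at h
  have h2 : ∀ x : ℝ, (-x) ^ m * (1 - (-x) ^ 2) ^ α * Real.exp (-t / (-x) ^ 2)
      = -(x ^ m * (1 - x ^ 2) ^ α * Real.exp (-t / x ^ 2)) := by
    intro x
    rw [hm.neg_pow, neg_sq]
    ring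
  simp only [h2, intervalIntegral.integral_neg] at h
  linarith

lemma meas_f (α t : ℝ) (m : ℕ) :
    Measurable (fun x : ℝ => x ^ m * (1 - x ^ 2) ^ α * Real.exp (-t / x ^ 2)) := by
  fun_prop

lemma intble (α t : ℝ) (hα : 0 < α) (ht : 0 < t) (m : ℕ) (a b : ℝ) (ha : -1 ≤ a) (hab : a ≤ b) (hb : b ≤ 1) :
    IntervalIntegrable (fun x : ℝ => x ^ (2*m) * (1 - x ^ 2) ^ α * Real.exp (-t / x ^ 2))
      volume a b := by
  rw [intervalIntegrable_iff]
  have hfin : volume (Set.uIoc a b) < ⊤ := measure_Ioc_lt_top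
  apply Integrable.mono' (g := fun _ : ℝ => (1:ℝ))
    (integrableOn_const hfin.ne) (meas_f α t (2*m)).aestronglyMeasurable
  refine (ae_restrict_iff' measurableSet_uIoc).2 (Filter.Eventually.of_forall fun x hx => ?_)
  rw [Set.uIoc_of_le hab] at hx
  have hx1 : |x| ≤ 1 := by
    rw [abs_le]; constructor <;> [linarith [hx.1]; linarith [hx.2]]
  have hx2 : x ^ 2 ≤ 1 := by
    nlinarith [abs_nonneg x, sq_abs x]
  have h1 : (0:ℝ) ≤ x ^ (2*m) := by
    rw [pow_mul]; exact pow_nonneg (sq_nonneg x) m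
  have h1' : x ^ (2*m) ≤ 1 := by
    rw [pow_mul]; exact pow_le_one₀ (sq_nonneg x) hx2
  have h2 : (0:ℝ) ≤ (1 - x ^ 2) ^ α := Real.rpow_nonneg (by linarith) α
  have h2' : (1 - x ^ 2) ^ α ≤ 1 := Real.rpow_le_one (by linarith) (by linarith [sq_nonneg x]) hα.le
  have h3 : (0:ℝ) ≤ Real.exp (-t / x ^ 2) := (Real.exp_pos _).le
  have h3' : Real.exp (-t / x ^ 2) ≤ 1 := by
    rw [Real.exp_le_one_iff]
    exact div_nonpos_iff.2 (Or.inr ⟨by linarith, sq_nonneg x⟩)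
  have : ‖x ^ (2*m) * (1 - x ^ 2) ^ α * Real.exp (-t / x ^ 2)‖
      = x ^ (2*m) * (1 - x ^ 2) ^ α * Real.exp (-t / x ^ 2) := by
    rw [Real.norm_eq_abs, abs_of_nonneg (by positivity)]
  rw [this]
  calc x ^ (2*m) * (1 - x ^ 2) ^ α * Real.exp (-t / x ^ 2)
      ≤ 1 * 1 * 1 := by gcongr
    _ = 1 := by ring

lemma sq_image : (fun x : ℝ => x ^ 2) '' Ioo 0 1 = Ioo 0 1 := by
  ext u
  constructor
  · rintro ⟨x, ⟨hx0, hx1⟩, rfl⟩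
    exact ⟨by positivity, by show x ^ 2 < 1; nlinarith⟩
  · rintro ⟨hu0, hu1⟩
    refine ⟨Real.sqrt u, ⟨Real.sqrt_pos.2 hu0, ?_⟩, Real.sq_sqrt hu0.le⟩
    have : Real.sqrt u < Real.sqrt 1 := Real.sqrt_lt_sqrt hu0.le hu1
    simpa using this

lemma cov (α t : ℝ) (m : ℕ) :
    ∫ x in (0:ℝ)..1, x ^ m * x ^ (-(1/2):ℝ) * (1 - x) ^ α * Real.exp (-t / x)
      = 2 * ∫ x in (0:ℝ)..1, x ^ (2*m) * (1 - x ^ 2) ^ α * Real.exp (-t / x ^ 2) := by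
  set g : ℝ → ℝ := fun x => x ^ m * x ^ (-(1/2):ℝ) * (1 - x) ^ α * Real.exp (-t / x) with hg
  set f : ℝ → ℝ := fun x => x ^ (2*m) * (1 - x ^ 2) ^ α * Real.exp (-t / x ^ 2) with hf
  have hderiv : ∀ x ∈ Ioo (0:ℝ) 1,
      HasDerivWithinAt (fun y : ℝ => y ^ 2) (2 * x) (Ioo (0:ℝ) 1) x := by
    intro x _
    have : HasDerivAt (fun y : ℝ => y ^ 2) (2 * x) x := by
      simpa using hasDerivAt_pow 2 x
    exact this.hasDerivWithinAt
  have hinj : Set.InjOn (fun y : ℝ => y ^ 2) (Ioo 0 1) := by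
    intro a ha b hb h
    have h' : (a - b) * (a + b) = 0 := by simp only [] at h; linear_combination h
    rcases mul_eq_zero.1 h' with h'' | h''
    · linarith
    · exfalso; have := ha.1; have := hb.1; linarith
  have key := MeasureTheory.integral_image_eq_integral_abs_deriv_smul measurableSet_Ioo
    hderiv hinj g
  rw [sq_image] at key
  have hpt : ∀ x ∈ Ioo (0:ℝ) 1, |2 * x| • g (x ^ 2) = 2 * f x := by
    intro x hx
    have hx0 : 0 < x := hx.1
    have h1 : ((x:ℝ) ^ 2) ^ (m:ℕ) = x ^ (2*m) := by rw [← pow_mul, mul_comm]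
    have h2 : ((x:ℝ) ^ 2) ^ (-(1/2):ℝ) = x⁻¹ := by
      rw [← Real.rpow_natCast x 2, ← Real.rpow_mul hx0.le]
      norm_num
      exact Real.rpow_neg_one x
    have h3 : |2 * x| = 2 * x := abs_of_pos (by linarith)
    simp only [hg, hf, smul_eq_mul, h3, h1, h2]
    field_simp
  rw [MeasureTheory.setIntegral_congr_fun measurableSet_Ioo hpt] at key
  rw [intervalIntegral.integral_of_le (by norm_num : (0:ℝ) ≤ 1),
      intervalIntegral.integral_of_le (by norm_num : (0:ℝ) ≤ 1),
      MeasureTheory.integral_Ioc_eq_integral_Ioo,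
      MeasureTheory.integral_Ioc_eq_integral_Ioo, key,
      MeasureTheory.integral_const_mul]

lemma mu_even (α t : ℝ) (hα : 0 < α) (ht : 0 < t) (m : ℕ) :
    ∫ x in (-1:ℝ)..1, x ^ (2*m) * (1 - x ^ 2) ^ α * Real.exp (-t / x ^ 2)
      = ∫ x in (0:ℝ)..1, x ^ m * x ^ (-(1/2):ℝ) * (1 - x) ^ α * Real.exp (-t / x) := by
  set f : ℝ → ℝ := fun x => x ^ (2*m) * (1 - x ^ 2) ^ α * Real.exp (-t / x ^ 2) with hf
  have hI1 : IntervalIntegrable f volume (-1) 0 := intble α t hα ht m _ _ le_rfl (by norm_num) (by norm_num)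
  have hI2 : IntervalIntegrable f volume 0 1 := intble α t hα ht m _ _ (by norm_num) (by norm_num) le_rfl
  have hsplit := intervalIntegral.integral_add_adjacent_intervals hI1 hI2
  have hrefl : ∫ x in (-1:ℝ)..0, f x = ∫ x in (0:ℝ)..1, f x := by
    have h := intervalIntegral.integral_comp_neg (a := (0:ℝ)) (b := 1) f
    have h2 : ∀ x : ℝ, f (-x) = f x := by
      intro x
      simp only [hf, pow_mul, neg_sq]
    simp only [h2, neg_zero] at h
    exact h.symm
  rw [cov α t m]
  rw [← hsplit, hrefl]
  ring

lemma shift (α t : ℝ) (m : ℕ) :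
    ∫ x in (0:ℝ)..1, x ^ (m+1) * x ^ (-(1/2):ℝ) * (1 - x) ^ α * Real.exp (-t / x)
      = ∫ x in (0:ℝ)..1, x ^ m * x ^ ((1/2):ℝ) * (1 - x) ^ α * Real.exp (-t / x) := by
  apply intervalIntegral.integral_congr
  intro x hx
  rw [Set.uIcc_of_le (by norm_num : (0:ℝ) ≤ 1)] at hx
  rcases eq_or_lt_of_le hx.1 with h0 | h0
  · subst h0
    simp [Real.zero_rpow (by norm_num : ((1:ℝ)/2) ≠ 0)]
  · have hhalf : x * x ^ (-(1/2):ℝ) = x ^ ((1/2):ℝ) := by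
      nth_rewrite 1 [← Real.rpow_one x]
      rw [← Real.rpow_add h0]
      norm_num
    have : x ^ (m+1) * x ^ (-(1/2):ℝ) = x ^ m * x ^ ((1/2):ℝ) := by
      rw [pow_succ, mul_assoc, hhalf]
    show x ^ (m+1) * x ^ (-(1/2):ℝ) * (1 - x) ^ α * Real.exp (-t / x)
      = x ^ m * x ^ ((1/2):ℝ) * (1 - x) ^ α * Real.exp (-t / x)
    rw [this]

def ilv (m n N : ℕ) (h1 : N = m + n) (h2 : m = n ∨ m = n + 1) : Fin m ⊕ Fin n ≃ Fin N where
  toFun x := x.elim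
    (fun j => ⟨2 * j.1, by have := j.isLt; omega⟩)
    (fun j => ⟨2 * j.1 + 1, by have := j.isLt; omega⟩)
  invFun i :=
    if h : i.1 % 2 = 0 then Sum.inl ⟨i.1 / 2, by have := i.isLt; omega⟩
    else Sum.inr ⟨i.1 / 2, by have := i.isLt; omega⟩
  left_inv := by
    rintro (⟨j, hj⟩ | ⟨j, hj⟩) <;> dsimp only [Sum.elim_inl, Sum.elim_inr]
    · rw [dif_pos (by omega)]
      simp only [Sum.inl.injEq, Fin.mk.injEq]
      omega
    · rw [dif_neg (by omega)]
      simp only [Sum.inr.injEq, Fin.mk.injEq]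
      omega
  right_inv := by
    rintro ⟨i, hi⟩
    dsimp only
    by_cases h : i % 2 = 0
    · rw [dif_pos h]
      simp only [Sum.elim_inl, Fin.mk.injEq]
      omega
    · rw [dif_neg h]
      simp only [Sum.elim_inr, Fin.mk.injEq]
      omega

lemma hankel_split (μ : ℕ → ℝ) (hodd : ∀ k, Odd k → μ k = 0)
    (m n N : ℕ) (h1 : N = m + n) (h2 : m = n ∨ m = n + 1) :
    (Matrix.of fun j k : Fin N => μ ((j : ℕ) + (k : ℕ))).det
      = (Matrix.of fun j k : Fin m => μ (2 * ((j : ℕ) + (k : ℕ)))).det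
        * (Matrix.of fun j k : Fin n => μ (2 * ((j : ℕ) + (k : ℕ)) + 2)).det := by
  set e := ilv m n N h1 h2
  rw [← Matrix.det_submatrix_equiv_self e]
  have hsub : (Matrix.of fun j k : Fin N => μ ((j : ℕ) + (k : ℕ))).submatrix e e
      = Matrix.fromBlocks
          (Matrix.of fun j k : Fin m => μ (2 * ((j : ℕ) + (k : ℕ))))
          0 0
          (Matrix.of fun j k : Fin n => μ (2 * ((j : ℕ) + (k : ℕ)) + 2)) := by
    ext i j
    rcases i with i | i <;> rcases j with j | j <;>
      simp only [Matrix.submatrix_apply, Matrix.of_apply, Matrix.fromBlocks_apply₁₁,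
        Matrix.fromBlocks_apply₁₂, Matrix.fromBlocks_apply₂₁, Matrix.fromBlocks_apply₂₂,
        Matrix.zero_apply, e, ilv, Equiv.coe_fn_mk, Sum.elim_inl, Sum.elim_inr]
    · congr 1; omega
    · exact hodd _ ⟨(i : ℕ) + (j : ℕ), by omega⟩
    · exact hodd _ ⟨(i : ℕ) + (j : ℕ), by omega⟩
    · congr 1; omega
  rw [hsub, Matrix.det_fromBlocks_zero₂₁]

theorem stmt_19
    (α t : ℝ) (hα : 0 < α) (ht : 0 < t)
    (D : ℕ → ℝ)
    (hD : ∀ n : ℕ, D n = (Matrix.of fun j k : Fin n =>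
      ∫ x in (-1:ℝ)..1,
        x ^ ((j : ℕ) + (k : ℕ)) * (1 - x ^ 2) ^ α * Real.exp (-t / x ^ 2)).det)
    (Dt : ℕ → ℝ → ℝ → ℝ)
    (hDt : ∀ n : ℕ, ∀ a b : ℝ, Dt n a b = (Matrix.of fun i j : Fin n =>
      ∫ x in (0:ℝ)..1,
        x ^ ((i : ℕ) + (j : ℕ)) * x ^ a * (1 - x) ^ b * Real.exp (-t / x)).det) :
    ∀ n : ℕ,
      D (2 * n) = Dt n (1/2) α * Dt n (-(1/2)) α ∧
      D (2 * n + 1) = Dt n (1/2) α * Dt (n + 1) (-(1/2)) α := by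
  set μ : ℕ → ℝ := fun p => ∫ x in (-1:ℝ)..1,
    x ^ p * (1 - x ^ 2) ^ α * Real.exp (-t / x ^ 2) with hμ
  have hodd : ∀ k, Odd k → μ k = 0 := fun k hk => mu_odd α t k hk
  have heven : ∀ N : ℕ, (Matrix.of fun j k : Fin N => μ (2 * ((j : ℕ) + (k : ℕ)))).det
      = Dt N (-(1/2)) α := by
    intro N
    rw [hDt N (-(1/2)) α]
    apply congrArg Matrix.det
    ext j k
    exact mu_even α t hα ht ((j : ℕ) + (k : ℕ))
  have hoddb : ∀ N : ℕ, (Matrix.of fun j k : Fin N => μ (2 * ((j : ℕ) + (k : ℕ)) + 2)).det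
      = Dt N (1/2) α := by
    intro N
    rw [hDt N (1/2) α]
    apply congrArg Matrix.det
    ext j k
    have h1 : 2 * ((j : ℕ) + (k : ℕ)) + 2 = 2 * (((j : ℕ) + (k : ℕ)) + 1) := by ring
    rw [Matrix.of_apply, Matrix.of_apply, h1]
    rw [show μ (2 * (((j : ℕ) + (k : ℕ)) + 1)) = _ from mu_even α t hα ht (((j : ℕ) + (k : ℕ)) + 1)]
    exact shift α t ((j : ℕ) + (k : ℕ))
  intro n
  constructor
  · have key : (Matrix.of fun j k : Fin (2 * n) => μ ((j : ℕ) + (k : ℕ))).det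
        = (Matrix.of fun j k : Fin n => μ (2 * ((j : ℕ) + (k : ℕ)))).det
          * (Matrix.of fun j k : Fin n => μ (2 * ((j : ℕ) + (k : ℕ)) + 2)).det :=
      hankel_split μ hodd n n (2 * n) (by ring) (Or.inl rfl)
    rw [hD (2 * n)]
    rw [show (Matrix.of fun j k : Fin (2 * n) =>
      ∫ x in (-1:ℝ)..1, x ^ ((j : ℕ) + (k : ℕ)) * (1 - x ^ 2) ^ α * Real.exp (-t / x ^ 2)).det
        = _ from key]
    rw [heven n, hoddb n, mul_comm]
  · have key : (Matrix.of fun j k : Fin (2 * n + 1) => μ ((j : ℕ) + (k : ℕ))).det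
        = (Matrix.of fun j k : Fin (n + 1) => μ (2 * ((j : ℕ) + (k : ℕ)))).det
          * (Matrix.of fun j k : Fin n => μ (2 * ((j : ℕ) + (k : ℕ)) + 2)).det :=
      hankel_split μ hodd (n + 1) n (2 * n + 1) (by ring) (Or.inr rfl)
    rw [hD (2 * n + 1)]
    rw [show (Matrix.of fun j k : Fin (2 * n + 1) =>
      ∫ x in (-1:ℝ)..1, x ^ ((j : ℕ) + (k : ℕ)) * (1 - x ^ 2) ^ α * Real.exp (-t / x ^ 2)).det
        = _ from key]
    rw [heven (n + 1), hoddb n, mul_comm]
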